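/- Sharpness example: Let A = Iₙ (the n × n identity), b = 0, x = 0, and r = (1,…,1). Then R = n, γ = 1, and for the noisy randomized Kaczmarz iterates x*_k run on Ax ≈ b + r (i.e., each step projects onto {z : z_i = 1} for a uniformly random i), 𝔼‖x*_k - x‖ ≥ √R − (1 − 1/R)^{k/2} ‖x₀ − r‖, where r = (1,…,1). In particular, the limiting expected error is at least √R = √n = √R γ. -/

import Mathlib

open Finset

/-- Euclidean norm on `Fin k → ℝ`. -/
noncomputable def enorm' {k : ℕ} (v : Fin k → ℝ) : ℝ := Real.sqrt (∑ j, v j ^ 2)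

/-- Standard inner product on `Fin k → ℝ`. -/
noncomputable def ip {k : ℕ} (v w : Fin k → ℝ) : ℝ := ∑ j, v j * w j

/-- Frobenius norm of a matrix. -/
noncomputable def frob {m n : ℕ} (A : Matrix (Fin m) (Fin n) ℝ) : ℝ :=
  Real.sqrt (∑ i, ∑ j, A i j ^ 2)

/-- `‖A⁻¹‖ = inf {M : M‖Az‖ ≥ ‖z‖ for all z}`. -/
noncomputable def invNorm {m n : ℕ} (A : Matrix (Fin m) (Fin n) ℝ) : ℝ :=
  sInf {M : ℝ | ∀ z : Fin n → ℝ, enorm' z ≤ M * enorm' (A.mulVec z)}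

/-- Kaczmarz iteration driven by a list of row indices (head = last step):
each step orthogonally projects onto the hyperplane `{z : ⟨a_i, z⟩ = c i}`. -/
noncomputable def kIter {m n : ℕ} (A : Matrix (Fin m) (Fin n) ℝ) (c : Fin m → ℝ)
    (x0 : Fin n → ℝ) : List (Fin m) → (Fin n → ℝ)
  | [] => x0
  | i :: l => kIter A c x0 l + ((c i - ip (A i) (kIter A c x0 l)) / enorm' (A i) ^ 2) • A i

lemma kIter_one {n : ℕ} (x0 : Fin n → ℝ) (l : List (Fin n)) (j : Fin n) :
    kIter (1 : Matrix (Fin n) (Fin n) ℝ) (fun _ => (1:ℝ)) x0 l j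
      = if j ∈ l then 1 else x0 j := by
  induction l with
  | nil => simp [kIter]
  | cons i l ih =>
    have hA : (1 : Matrix (Fin n) (Fin n) ℝ) i = fun j => if i = j then 1 else 0 := by
      ext j; simp [Matrix.one_apply]
    have hnorm : enorm' ((1 : Matrix (Fin n) (Fin n) ℝ) i) = 1 := by
      simp [enorm', hA, Finset.sum_ite_eq]
    have hip : ip ((1 : Matrix (Fin n) (Fin n) ℝ) i)
        (kIter (1 : Matrix (Fin n) (Fin n) ℝ) (fun _ => (1:ℝ)) x0 l)
        = kIter (1 : Matrix (Fin n) (Fin n) ℝ) (fun _ => (1:ℝ)) x0 l i := by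
      simp [ip, hA, ite_mul, Finset.sum_ite_eq]
    simp only [kIter, Pi.add_apply, Pi.smul_apply, hnorm, hip, one_pow, div_one, smul_eq_mul,
      List.mem_cons]
    rw [hA]
    rcases eq_or_ne j i with rfl | hne
    · simp
    · simp [hne, Ne.symm hne, ih]

lemma enorm_eq {k : ℕ} (v : Fin k → ℝ) :
    enorm' v = ‖(WithLp.equiv 2 (Fin k → ℝ)).symm v‖ := by
  rw [enorm', EuclideanSpace.norm_eq]
  congr 1; apply Finset.sum_congr rfl; intro j _
  simp [Real.norm_eq_abs, sq_abs]

lemma enorm_nonneg {k : ℕ} (v : Fin k → ℝ) : 0 ≤ enorm' v := Real.sqrt_nonneg _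

lemma enorm_triangle {k : ℕ} (v w : Fin k → ℝ) : enorm' w - enorm' (w - v) ≤ enorm' v := by
  simp only [enorm_eq]
  have h : (WithLp.equiv 2 (Fin k → ℝ)).symm (w - v)
      = (WithLp.equiv 2 (Fin k → ℝ)).symm w - (WithLp.equiv 2 (Fin k → ℝ)).symm v := rfl
  rw [h]
  have := norm_sub_norm_le ((WithLp.equiv 2 (Fin k → ℝ)).symm w)
    ((WithLp.equiv 2 (Fin k → ℝ)).symm w - (WithLp.equiv 2 (Fin k → ℝ)).symm v)
  simpa using this

/-- Sharpness example: for `A = Iₙ`, `b = 0`, `x = 0`, `r = (1,…,1)`, the expected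
error of noisy randomized Kaczmarz is at least `√n - (1 - 1/n)^{k/2} ‖x₀ - r‖`. -/
theorem stmt_11 (n : ℕ) (hn : 0 < n) (x0 : Fin n → ℝ) (k : ℕ) :
    Real.sqrt n - Real.sqrt ((1 - 1 / (n : ℝ)) ^ k) * enorm' (x0 - fun _ => (1 : ℝ)) ≤
      ∑ f : Fin k → Fin n, ((1 : ℝ) / n) ^ k *
        enorm' (kIter (1 : Matrix (Fin n) (Fin n) ℝ) (fun _ => (1 : ℝ)) x0 (List.ofFn f)
          - (0 : Fin n → ℝ)) := by
  set r : Fin n → ℝ := fun _ => 1 with hr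
  set p : ℝ := ((1:ℝ)/n)^k with hp
  have hp0 : 0 ≤ p := by positivity
  set y : (Fin k → Fin n) → (Fin n → ℝ) :=
    fun f => kIter (1 : Matrix (Fin n) (Fin n) ℝ) (fun _ => (1:ℝ)) x0 (List.ofFn f) with hy
  set b : (Fin k → Fin n) → ℝ :=
    fun f => ∑ j, (if ∃ i, f i = j then (0:ℝ) else (x0 j - 1)^2) with hb
  have hb0 : ∀ f, 0 ≤ b f := by
    intro f; apply Finset.sum_nonneg; intro j _; split <;> positivity
  -- the error after the steps in f
  have hyr : ∀ f, enorm' (y f - r) = Real.sqrt (b f) := by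
    intro f
    rw [enorm', hb]
    congr 1; apply Finset.sum_congr rfl; intro j _
    have : y f j = if j ∈ List.ofFn f then 1 else x0 j := kIter_one x0 _ j
    simp only [Pi.sub_apply, this, List.mem_ofFn, Set.mem_range, hr]
    split <;> simp
  -- per-sample lower bound
  have hlow : ∀ f, Real.sqrt n - Real.sqrt (b f) ≤ enorm' (y f - 0) := by
    intro f
    have hrn : enorm' r = Real.sqrt n := by simp [enorm', hr]
    have := enorm_triangle (w := r) (v := y f)
    rw [← hyr f, ← hrn, sub_zero]
    have h2 : enorm' (r - y f) = enorm' (y f - r) := by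
      rw [enorm_eq, enorm_eq]
      have : (WithLp.equiv 2 (Fin n → ℝ)).symm (r - y f)
          = -((WithLp.equiv 2 (Fin n → ℝ)).symm (y f - r)) := by
        ext j; simp
      rw [this, norm_neg]
    linarith [enorm_triangle (v := y f) (w := r), h2.ge, h2.le]
  -- total probability is 1
  have hsump : ∑ _f : Fin k → Fin n, p = 1 := by
    rw [Finset.sum_const, nsmul_eq_mul]
    simp only [Finset.card_univ, Fintype.card_fun, Fintype.card_fin, hp]
    push_cast
    rw [← mul_pow]
    field_simp
    simp
  -- expected squared error
  have hprod : ∀ (f : Fin k → Fin n) (j : Fin n),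
      (∏ i : Fin k, (if f i = j then (0:ℝ) else 1/n)) = if ∃ i, f i = j then 0 else p := by
    intro f j
    by_cases h : ∃ i, f i = j
    · obtain ⟨i, hi⟩ := h
      rw [if_pos ⟨i, hi⟩]
      exact Finset.prod_eq_zero (Finset.mem_univ i) (by simp [hi])
    · push_neg at h
      rw [if_neg (by push_neg; exact h),
        Finset.prod_congr rfl (fun i _ => if_neg (h i)), Finset.prod_const,
        Finset.card_univ, Fintype.card_fin, hp]
  have key : ∀ j : Fin n, (∑ f : Fin k → Fin n, if ∃ i, f i = j then (0:ℝ) else p)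
      = (1 - 1/(n:ℝ))^k := by
    intro j
    rw [← Finset.sum_congr rfl (fun f _ => hprod f j),
      ← Fintype.sum_pow (fun a : Fin n => if a = j then (0:ℝ) else 1/n) k]
    congr 1
    have h1 : ∀ a : Fin n, (if a = j then (0:ℝ) else 1/n)
        = 1/n - (if a = j then (1:ℝ)/n else 0) := by intro a; split <;> ring
    rw [Finset.sum_congr rfl (fun a _ => h1 a), Finset.sum_sub_distrib,
      Finset.sum_const, Finset.sum_ite_eq' Finset.univ j, Finset.card_univ, Fintype.card_fin]
    have hn' : (n:ℝ) ≠ 0 := by exact_mod_cast hn.ne'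
    field_simp
    rw [if_pos (Finset.mem_univ j), nsmul_eq_mul, mul_sub, mul_one_div_cancel hn', mul_one]
  have hEsq : ∑ f : Fin k → Fin n, p * b f
      = (1 - 1/(n:ℝ))^k * ∑ j, (x0 j - 1)^2 := by
    have h1 : ∀ f : Fin k → Fin n, p * b f
        = ∑ j, (x0 j - 1)^2 * (if ∃ i, f i = j then (0:ℝ) else p) := by
      intro f
      rw [hb, Finset.mul_sum]
      apply Finset.sum_congr rfl; intro j _
      split <;> ring
    rw [Finset.sum_congr rfl (fun f _ => h1 f), Finset.sum_comm, Finset.mul_sum]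
    apply Finset.sum_congr rfl; intro j _
    rw [← Finset.mul_sum, key j]; ring
  -- Cauchy-Schwarz / Jensen
  set S : ℝ := ∑ f : Fin k → Fin n, p * Real.sqrt (b f) with hS
  have hS0 : 0 ≤ S := Finset.sum_nonneg fun f _ => mul_nonneg hp0 (Real.sqrt_nonneg _)
  have hcs : S ^ 2 ≤ ∑ f : Fin k → Fin n, p * b f := by
    have := Finset.sum_sq_le_sum_mul_sum_of_sq_eq_mul Finset.univ
      (r := fun f : Fin k → Fin n => p * Real.sqrt (b f))
      (f := fun _ => p) (g := fun f => p * b f)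
      (fun _ _ => hp0) (fun f _ => mul_nonneg hp0 (hb0 f))
      (fun f _ => by rw [mul_pow, Real.sq_sqrt (hb0 f)]; ring)
    rwa [hsump, one_mul] at this
  have hSle : S ≤ Real.sqrt ((1 - 1/(n:ℝ))^k) * enorm' (x0 - fun _ => (1:ℝ)) := by
    have he : enorm' (x0 - fun _ => (1:ℝ)) = Real.sqrt (∑ j, (x0 j - 1)^2) := by
      rw [enorm']; congr 1
    have h2 : Real.sqrt ((1 - 1/(n:ℝ))^k) * enorm' (x0 - fun _ => (1:ℝ))
        = Real.sqrt ((1 - 1/(n:ℝ))^k * ∑ j, (x0 j - 1)^2) := by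
      rw [he, Real.sqrt_mul (pow_nonneg (by
        rw [sub_nonneg, div_le_one (by exact_mod_cast hn)]
        exact_mod_cast hn) k)]
    rw [h2, ← hEsq]
    exact Real.le_sqrt_of_sq_le hcs
  -- conclude
  calc Real.sqrt n - Real.sqrt ((1 - 1/(n:ℝ))^k) * enorm' (x0 - fun _ => (1:ℝ))
      ≤ Real.sqrt n - S := by linarith
    _ = ∑ f : Fin k → Fin n, (p * Real.sqrt n - p * Real.sqrt (b f)) := by
        rw [Finset.sum_sub_distrib, ← Finset.sum_mul, hsump, one_mul, hS]
    _ ≤ ∑ f : Fin k → Fin n, p * enorm' (y f - 0) := by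
        apply Finset.sum_le_sum; intro f _
        have := mul_le_mul_of_nonneg_left (hlow f) hp0
        linarith [this]
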